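/- For every real u > 1 there exist an integer j ≥ 1 and a Borel set H ⊆ Λ_{j−1} ∖ Λ_j such that the super-level set {x ∈ [0,1] : φ_α(x) > u} coincides with Λ_j ∪ H up to an 𝔪-null set; consequently λ^j ≤ u^{−α} ≤ λ^{j−1}, so that j grows logarithmically in u. (Structural description of the rare-event sets, equation (4.3) of the paper.) -/

import Mathlib

open Set MeasureTheory Filter
open scoped ENNReal Topology Classical

/-- The setup of Section 2 of the paper: a full-branched Markov linear map `G` on `[0,1]`
with branch domains `I_1,…,I_{k_I}` (mapped affinely onto `[0,1]`) and complementary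
intervals `J_j` (mapped affinely onto `(0,1)`), all of length at most `1/2`. -/
structure CantorData where
  kI : ℕ
  hkI : 1 ≤ kI
  a : ℕ → ℝ
  ha_lt : ∀ i, i + 1 < 2 * kI → a i < a (i + 1)
  ha0 : 0 ≤ a 0
  ha1 : a (2 * kI - 1) ≤ 1
  G : ℝ → ℝ
  hGmaps : Set.MapsTo G (Set.Icc 0 1) (Set.Icc 0 1)
  hGI : ∀ i < kI, ∃ s c : ℝ,
    |s| * (a (2 * i + 1) - a (2 * i)) = 1 ∧
    (∀ x ∈ Set.Icc (a (2 * i)) (a (2 * i + 1)), G x = s * x + c) ∧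
    Set.BijOn G (Set.Icc (a (2 * i)) (a (2 * i + 1))) (Set.Icc 0 1)
  hGJmid : ∀ i, i + 1 < kI → ∃ s c : ℝ,
    |s| * (a (2 * i + 2) - a (2 * i + 1)) = 1 ∧
    (∀ x ∈ Set.Ioo (a (2 * i + 1)) (a (2 * i + 2)), G x = s * x + c) ∧
    Set.SurjOn G (Set.Ioo (a (2 * i + 1)) (a (2 * i + 2))) (Set.Ioo 0 1)
  hGJleft : 0 < a 0 → ∃ s c : ℝ,
    |s| * a 0 = 1 ∧
    (∀ x ∈ Set.Ico 0 (a 0), G x = s * x + c) ∧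
    Set.SurjOn G (Set.Ico 0 (a 0)) (Set.Ioo 0 1)
  hGJright : a (2 * kI - 1) < 1 → ∃ s c : ℝ,
    |s| * (1 - a (2 * kI - 1)) = 1 ∧
    (∀ x ∈ Set.Ioc (a (2 * kI - 1)) 1, G x = s * x + c) ∧
    Set.SurjOn G (Set.Ioc (a (2 * kI - 1)) 1) (Set.Ioo 0 1)
  hIlen : ∀ i < kI, a (2 * i + 1) - a (2 * i) ≤ 1 / 2
  hJlenL : a 0 ≤ 1 / 2
  hJlenR : 1 - a (2 * kI - 1) ≤ 1 / 2
  hJlenM : ∀ i, i + 1 < kI → a (2 * i + 2) - a (2 * i + 1) ≤ 1 / 2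
  hkJ : (Set.Icc (0:ℝ) 1 \ ⋃ i ∈ Finset.range kI,
      Set.Icc (a (2 * i)) (a (2 * i + 1))).Nonempty

namespace CantorData

variable (S : CantorData)

/-- The union `⋃_i I_i` of the branch domains forming the Cantor construction. -/
def IU : Set ℝ := ⋃ i ∈ Finset.range S.kI, Set.Icc (S.a (2 * i)) (S.a (2 * i + 1))

/-- `Λ_n = {x ∈ [0,1] : G^{i-1}(x) ∈ ⋃ I for all 1 ≤ i ≤ n}`. -/
def Lam (n : ℕ) : Set ℝ := {x ∈ Set.Icc (0:ℝ) 1 | ∀ i < n, S.G^[i] x ∈ S.IU}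

/-- The dynamically defined Cantor set `Λ = ⋂_n Λ_n`. -/
def Cantor : Set ℝ := ⋂ n : ℕ, S.Lam n

/-- `λ = |⋃ I_i| = Σ_i 1/m_i`. -/
noncomputable def lam : ℝ := ∑ i ∈ Finset.range S.kI, (S.a (2 * i + 1) - S.a (2 * i))

/-- `𝔪`, Lebesgue measure on `[0,1]`. -/
noncomputable def mes (_S : CantorData) : Measure ℝ := volume.restrict (Set.Icc 0 1)

/-- `ψ(x) = Σ_{i ∈ 𝓘_x} 2^{-i}` where `𝓘_x = {i ≥ 1 : G^{i-1}(x) ∉ ⋃ I}`. -/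
noncomputable def psi (x : ℝ) : ℝ :=
  ∑' i : ℕ, if S.G^[i] x ∈ S.IU then 0 else (2:ℝ)⁻¹ ^ (i + 1)

/-- `F(t) = 𝔪{x : ψ(x) ≤ t}`, the distribution function of `ψ`. -/
noncomputable def F (t : ℝ) : ℝ := (S.mes {x | S.psi x ≤ t}).toReal

/-- `φ_α = (F ∘ ψ)^{-1/α}`, with value `∞` where `F ∘ ψ` vanishes. -/
noncomputable def phi (α : ℝ) (x : ℝ) : ℝ≥0∞ :=
  ENNReal.ofReal (S.F (S.psi x)) ^ (-(1 / α))

/-- `X_n = φ_α ∘ G^n`. -/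
noncomputable def X (α : ℝ) (n : ℕ) (x : ℝ) : ℝ≥0∞ := S.phi α (S.G^[n] x)

/-- `P_n`: the points following the Cantor construction exactly `n` steps and
never entering `⋃ I` afterwards. -/
def Pset (n : ℕ) : Set ℝ :=
  {x ∈ Set.Icc (0:ℝ) 1 | (∀ i < n, S.G^[i] x ∈ S.IU) ∧ ∀ i, n ≤ i → S.G^[i] x ∉ S.IU}

/-- The family of partition intervals `(I,J)_1,…,(I,J)_{k_I+k_J}`. -/
def PieceFamily : Set (Set ℝ) :=
  ((fun i => Set.Icc (S.a (2 * i)) (S.a (2 * i + 1))) '' Set.Iio S.kI) ∪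
  ((fun i => Set.Ioo (S.a (2 * i + 1)) (S.a (2 * i + 2))) '' {i | i + 1 < S.kI}) ∪
  {Set.Ico (0:ℝ) (S.a 0), Set.Ioc (S.a (2 * S.kI - 1)) 1}

/-- The depth-`d` cylinder `C_w = ⋂_{k=1}^d G^{-(k-1)}((I,J)_{w_k})`. -/
def Cyl (d : ℕ) (w : ℕ → Set ℝ) : Set ℝ := ⋂ k ∈ Finset.range d, (S.G^[k]) ⁻¹' (w k)

/-- `C` is a depth-`d` cylinder. -/
def IsCylinder (d : ℕ) (C : Set ℝ) : Prop :=
  ∃ w : ℕ → Set ℝ, (∀ k < d, w k ∈ S.PieceFamily) ∧ C = S.Cyl d w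

/-- `Υ⁺(A,d)`: union of the depth-`d` cylinders meeting `A`. -/
def upApprox (A : Set ℝ) (d : ℕ) : Set ℝ :=
  ⋃₀ {C | S.IsCylinder d C ∧ (C ∩ A).Nonempty}

/-- `Υ⁻(A,d)`: union of the depth-`d` cylinders contained in `A`. -/
def lowApprox (A : Set ℝ) (d : ℕ) : Set ℝ :=
  ⋃₀ {C | S.IsCylinder d C ∧ C ⊆ A}

/-- `u_n(τ) = (n/τ)^{1/α}`. -/
noncomputable def un (_S : CantorData) (α τ : ℝ) (n : ℕ) : ℝ := ((n : ℝ) / τ) ^ (1 / α)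

/-- `U_n(τ) = {X_0 > u_n(τ)}`. -/
noncomputable def Un (α τ : ℝ) (n : ℕ) : Set ℝ :=
  {x ∈ Set.Icc (0:ℝ) 1 | ENNReal.ofReal (S.un α τ n) < S.X α 0 x}

/-- `U_n^{(1)}(τ) = U_n(τ) ∩ G^{-1}([0,1] ∖ U_n(τ))`. -/
noncomputable def Un1 (α τ : ℝ) (n : ℕ) : Set ℝ :=
  S.Un α τ n ∩ S.G ⁻¹' (Set.Icc 0 1 \ S.Un α τ n)

/-- `U_n(τ',τ'') = U_n(τ') ∖ U_n(τ'')`. -/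
noncomputable def UnPair (α τ' τ'' : ℝ) (n : ℕ) : Set ℝ := S.Un α τ' n \ S.Un α τ'' n

/-- `U_n(τ',τ'')^{(1)}`. -/
noncomputable def UnPair1 (α τ' τ'' : ℝ) (n : ℕ) : Set ℝ :=
  S.UnPair α τ' τ'' n ∩ S.G ⁻¹' (Set.Icc 0 1 \ S.UnPair α τ' τ'' n)

/-- `j_{n,τ}`: the least `j` with `λ^j ≤ τ/n`. -/
noncomputable def jn (τ : ℝ) (n : ℕ) : ℕ := sInf {j : ℕ | S.lam ^ j ≤ τ / n}

/-- `Γ_n^+`: outer approximation of `U_n(τ',τ'')^{(1)}` by depth-`2 j_{n,τ'}` cylinders. -/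
noncomputable def GammaPlus (α τ' τ'' : ℝ) (n : ℕ) : Set ℝ :=
  S.upApprox (S.UnPair1 α τ' τ'' n) (2 * S.jn τ' n)

/-- `Γ_n^-`: inner approximation of `U_n(τ',τ'')^{(1)}` by depth-`2 j_{n,τ'}` cylinders. -/
noncomputable def GammaMinus (α τ' τ'' : ℝ) (n : ℕ) : Set ℝ :=
  S.lowApprox (S.UnPair1 α τ' τ'' n) (2 * S.jn τ' n)

end CantorData


namespace CantorData

variable (S : CantorData)

lemma a_le : ∀ j, j < 2 * S.kI → ∀ i, i ≤ j → S.a i ≤ S.a j := by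
  intro j
  induction j with
  | zero => intro _ i hi; interval_cases i; exact le_refl _
  | succ j ih =>
    intro hj i hi
    rcases Nat.eq_or_lt_of_le hi with rfl | hi'
    · exact le_refl _
    · exact le_trans (ih (by omega) i (by omega)) (le_of_lt (S.ha_lt j hj))

lemma a_lt {i j : ℕ} (hij : i < j) (hj : j < 2 * S.kI) : S.a i < S.a j := by
  obtain ⟨k, rfl⟩ : ∃ k, j = k + 1 := ⟨j - 1, by omega⟩
  exact lt_of_le_of_lt (S.a_le k (by omega) i (by omega)) (S.ha_lt k hj)

lemma mem_IU_iff {x : ℝ} :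
    x ∈ S.IU ↔ ∃ i < S.kI, x ∈ Icc (S.a (2 * i)) (S.a (2 * i + 1)) := by
  simp only [IU, Finset.mem_range, Set.mem_iUnion, mem_Icc, exists_prop]

lemma IU_subset : S.IU ⊆ Icc 0 1 := by
  intro x hx
  rcases S.mem_IU_iff.1 hx with ⟨i, hi, h1, h2⟩
  have hkI := S.hkI
  have h2i : 2 * i < 2 * S.kI := by omega
  have ha : S.a 0 ≤ S.a (2 * i) := S.a_le (2 * i) h2i 0 (by omega)
  have hb : S.a (2 * i + 1) ≤ S.a (2 * S.kI - 1) :=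
    S.a_le (2 * S.kI - 1) (by omega) (2 * i + 1) (by omega)
  exact ⟨le_trans S.ha0 (le_trans ha h1), le_trans h2 (le_trans hb S.ha1)⟩

lemma measurableSet_IU : MeasurableSet S.IU :=
  MeasurableSet.biUnion (Finset.range S.kI).countable_toSet
    (fun _ _ => measurableSet_Icc)

lemma isClosed_IU : IsClosed S.IU := by
  refine Set.Finite.isClosed_biUnion (Finset.range S.kI).finite_toSet
    (fun _ _ => isClosed_Icc)

lemma volume_affine_preimage {s : ℝ} (hs : s ≠ 0) (c : ℝ) (A : Set ℝ) :
    volume ((fun x => s * x + c) ⁻¹' A) = ENNReal.ofReal |s⁻¹| * volume A := by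
  have h : (fun x => s * x + c) ⁻¹' A = (fun x => s * x) ⁻¹' ((fun y => c + y) ⁻¹' A) := by
    ext x; simp [add_comm]
  rw [h, Real.volume_preimage_mul_left hs, measure_preimage_add]

lemma branchI {i : ℕ} (hi : i < S.kI) : ∃ s c : ℝ, s ≠ 0 ∧
    (∀ x ∈ Icc (S.a (2 * i)) (S.a (2 * i + 1)), S.G x = s * x + c) ∧
    (fun x => s * x + c) ⁻¹' (Icc 0 1) = Icc (S.a (2 * i)) (S.a (2 * i + 1)) ∧
    |s⁻¹| = S.a (2 * i + 1) - S.a (2 * i) := by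
  obtain ⟨s, c, hlen, hform, hbij⟩ := S.hGI i hi
  set p := S.a (2 * i) with hp
  set q := S.a (2 * i + 1) with hq
  have hpq : p < q := S.a_lt (by omega) (by omega)
  have hs : s ≠ 0 := by
    intro h; rw [h] at hlen; simp at hlen
  have hinv : |s⁻¹| = q - p := by
    rw [abs_inv]; exact inv_eq_of_mul_eq_one_right hlen
  refine ⟨s, c, hs, hform, ?_, hinv⟩
  have e0 : S.G p = s * p + c := hform p (left_mem_Icc.2 hpq.le)
  have e1 : S.G q = s * q + c := hform q (right_mem_Icc.2 hpq.le)
  have m0 : s * p + c ∈ Icc (0:ℝ) 1 := e0 ▸ hbij.mapsTo (left_mem_Icc.2 hpq.le)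
  have m1 : s * q + c ∈ Icc (0:ℝ) 1 := e1 ▸ hbij.mapsTo (right_mem_Icc.2 hpq.le)
  rw [mem_Icc] at m0 m1
  rcases hs.lt_or_gt with hneg | hpos
  · have habs : |s| = -s := abs_of_neg hneg
    have hd : (-s) * (q - p) = 1 := by rw [← habs]; exact hlen
    have f0 : s * p + c = 1 := by nlinarith
    have f1 : s * q + c = 0 := by nlinarith
    have hsn : (0:ℝ) < -s := by linarith
    ext x
    simp only [mem_preimage, mem_Icc]
    constructor
    · rintro ⟨h0, h1⟩
      exact ⟨le_of_mul_le_mul_left (by linarith : (-s) * p ≤ (-s) * x) hsn,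
        le_of_mul_le_mul_left (by linarith : (-s) * x ≤ (-s) * q) hsn⟩
    · rintro ⟨h0, h1⟩
      have g0 : (-s) * p ≤ (-s) * x := mul_le_mul_of_nonneg_left h0 hsn.le
      have g1 : (-s) * x ≤ (-s) * q := mul_le_mul_of_nonneg_left h1 hsn.le
      constructor <;> linarith
  · have habs : |s| = s := abs_of_pos hpos
    have hd : s * (q - p) = 1 := by rw [← habs]; exact hlen
    have f0 : s * p + c = 0 := by nlinarith
    have f1 : s * q + c = 1 := by nlinarith
    ext x
    simp only [mem_preimage, mem_Icc]
    constructor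
    · rintro ⟨h0, h1⟩
      exact ⟨le_of_mul_le_mul_left (by linarith : s * p ≤ s * x) hpos,
        le_of_mul_le_mul_left (by linarith : s * x ≤ s * q) hpos⟩
    · rintro ⟨h0, h1⟩
      have g0 : s * p ≤ s * x := mul_le_mul_of_nonneg_left h0 hpos.le
      have g1 : s * x ≤ s * q := mul_le_mul_of_nonneg_left h1 hpos.le
      constructor <;> linarith

end CantorData
namespace CantorData

variable (S : CantorData)

lemma branchJL (h : 0 < S.a 0) : ∃ s c : ℝ, s ≠ 0 ∧
    ∀ x ∈ Ico (0:ℝ) (S.a 0), S.G x = s * x + c := by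
  obtain ⟨s, c, hlen, hform, _⟩ := S.hGJleft h
  refine ⟨s, c, ?_, hform⟩
  intro hs; rw [hs] at hlen; simp at hlen

lemma branchJM {i : ℕ} (h : i + 1 < S.kI) : ∃ s c : ℝ, s ≠ 0 ∧
    ∀ x ∈ Ioo (S.a (2 * i + 1)) (S.a (2 * i + 2)), S.G x = s * x + c := by
  obtain ⟨s, c, hlen, hform, _⟩ := S.hGJmid i h
  refine ⟨s, c, ?_, hform⟩
  intro hs; rw [hs] at hlen; simp at hlen

lemma branchJR (h : S.a (2 * S.kI - 1) < 1) : ∃ s c : ℝ, s ≠ 0 ∧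
    ∀ x ∈ Ioc (S.a (2 * S.kI - 1)) 1, S.G x = s * x + c := by
  obtain ⟨s, c, hlen, hform, _⟩ := S.hGJright h
  refine ⟨s, c, ?_, hform⟩
  intro hs; rw [hs] at hlen; simp at hlen

lemma cover {x : ℝ} (hx : x ∈ Icc (0:ℝ) 1) :
    (∃ i < S.kI, x ∈ Icc (S.a (2 * i)) (S.a (2 * i + 1))) ∨
    (0 < S.a 0 ∧ x ∈ Ico (0:ℝ) (S.a 0)) ∨
    (∃ i, i + 1 < S.kI ∧ x ∈ Ioo (S.a (2 * i + 1)) (S.a (2 * i + 2))) ∨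
    (S.a (2 * S.kI - 1) < 1 ∧ x ∈ Ioc (S.a (2 * S.kI - 1)) 1) := by
  obtain ⟨hx0, hx1⟩ := hx
  by_cases hL : x < S.a 0
  · exact Or.inr (Or.inl ⟨lt_of_le_of_lt hx0 hL, hx0, hL⟩)
  by_cases hR : S.a (2 * S.kI - 1) < x
  · exact Or.inr (Or.inr (Or.inr ⟨lt_of_lt_of_le hR hx1, hR, hx1⟩))
  push_neg at hL hR
  have key : ∀ m, m < S.kI → x ≤ S.a (2 * m + 1) →
      (∃ i < S.kI, x ∈ Icc (S.a (2 * i)) (S.a (2 * i + 1))) ∨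
      (∃ i, i + 1 < S.kI ∧ x ∈ Ioo (S.a (2 * i + 1)) (S.a (2 * i + 2))) := by
    intro m
    induction m with
    | zero =>
      intro h0 hx'
      exact Or.inl ⟨0, h0, by simpa using hL, by simpa using hx'⟩
    | succ m ih =>
      intro hm hx'
      have e1 : 2 * (m + 1) = 2 * m + 2 := by ring
      have e2 : 2 * (m + 1) + 1 = 2 * m + 3 := by ring
      rw [e2] at hx'
      by_cases h : x ≤ S.a (2 * m + 1)
      · exact ih (by omega) h
      push_neg at h
      by_cases h2 : x < S.a (2 * m + 2)
      · exact Or.inr ⟨m, by omega, h, h2⟩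
      push_neg at h2
      exact Or.inl ⟨m + 1, hm, by
        rw [e1, show 2 * m + 2 + 1 = 2 * m + 3 from by ring]; exact ⟨h2, hx'⟩⟩
  have hkI := S.hkI
  have he : 2 * (S.kI - 1) + 1 = 2 * S.kI - 1 := by omega
  rcases key (S.kI - 1) (by omega) (by rw [he]; exact hR) with h | h
  · exact Or.inl h
  · exact Or.inr (Or.inr (Or.inl h))

lemma preimage_inter_measurable {A : Set ℝ} (hA : MeasurableSet A) :
    MeasurableSet (Icc 0 1 ∩ S.G ⁻¹' A) := by
  have hkI := S.hkI
  have haff : ∀ s c : ℝ, Measurable fun x : ℝ => s * x + c := by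
    intro s c; exact (measurable_id.const_mul s).add_const c
  have hEq : Icc 0 1 ∩ S.G ⁻¹' A =
      (⋃ i ∈ Finset.range S.kI, Icc (S.a (2 * i)) (S.a (2 * i + 1)) ∩ S.G ⁻¹' A) ∪
      (Ico (0:ℝ) (S.a 0) ∩ S.G ⁻¹' A) ∪
      (⋃ i ∈ Finset.range (S.kI - 1), Ioo (S.a (2 * i + 1)) (S.a (2 * i + 2)) ∩ S.G ⁻¹' A) ∪
      (Ioc (S.a (2 * S.kI - 1)) 1 ∩ S.G ⁻¹' A) := by
    apply Set.Subset.antisymm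
    · rintro x ⟨hx, hxA⟩
      rcases S.cover hx with ⟨i, hi, hmem⟩ | ⟨_, hmem⟩ | ⟨i, hi, hmem⟩ | ⟨_, hmem⟩
      · exact Or.inl (Or.inl (Or.inl (Set.mem_biUnion (Finset.mem_range.2 hi) ⟨hmem, hxA⟩)))
      · exact Or.inl (Or.inl (Or.inr ⟨hmem, hxA⟩))
      · exact Or.inl (Or.inr (Set.mem_biUnion (Finset.mem_range.2 (by omega)) ⟨hmem, hxA⟩))
      · exact Or.inr ⟨hmem, hxA⟩
    · rintro x (((h | h) | h) | h)
      · rcases Set.mem_iUnion₂.1 h with ⟨i, hi, hmem, hxA⟩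
        exact ⟨S.IU_subset (S.mem_IU_iff.2 ⟨i, Finset.mem_range.1 hi, hmem⟩), hxA⟩
      · refine ⟨⟨h.1.1, ?_⟩, h.2⟩
        have : S.a 0 ≤ S.a (2 * S.kI - 1) := S.a_le (2 * S.kI - 1) (by omega) 0 (by omega)
        exact le_trans h.1.2.le (le_trans this S.ha1)
      · rcases Set.mem_iUnion₂.1 h with ⟨i, hi, hmem, hxA⟩
        have hi' : i + 1 < S.kI := by have := Finset.mem_range.1 hi; omega
        refine ⟨⟨?_, ?_⟩, hxA⟩
        · have : S.a 0 ≤ S.a (2 * i + 1) := S.a_le (2 * i + 1) (by omega) 0 (by omega)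
          exact le_trans S.ha0 (le_trans this hmem.1.le)
        · have : S.a (2 * i + 2) ≤ S.a (2 * S.kI - 1) :=
            S.a_le (2 * S.kI - 1) (by omega) (2 * i + 2) (by omega)
          exact le_trans hmem.2.le (le_trans this S.ha1)
      · refine ⟨⟨?_, h.1.2⟩, h.2⟩
        have : S.a 0 ≤ S.a (2 * S.kI - 1) := S.a_le (2 * S.kI - 1) (by omega) 0 (by omega)
        exact le_trans S.ha0 (le_trans this h.1.1.le)
  rw [hEq]
  refine MeasurableSet.union (MeasurableSet.union (MeasurableSet.union ?_ ?_) ?_) ?_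
  · refine MeasurableSet.biUnion (Finset.range S.kI).countable_toSet (fun i hi => ?_)
    obtain ⟨s, c, hs, hform, _, _⟩ := S.branchI (Finset.mem_range.1 hi)
    have : Icc (S.a (2 * i)) (S.a (2 * i + 1)) ∩ S.G ⁻¹' A =
        Icc (S.a (2 * i)) (S.a (2 * i + 1)) ∩ (fun x => s * x + c) ⁻¹' A := by
      ext x
      simp only [Set.mem_inter_iff, mem_preimage, and_congr_right_iff]
      intro hx; rw [hform x hx]
    rw [this]; exact measurableSet_Icc.inter (haff s c hA)
  · by_cases h0 : 0 < S.a 0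
    · obtain ⟨s, c, hs, hform⟩ := S.branchJL h0
      have : Ico (0:ℝ) (S.a 0) ∩ S.G ⁻¹' A = Ico (0:ℝ) (S.a 0) ∩ (fun x => s * x + c) ⁻¹' A := by
        ext x
        simp only [Set.mem_inter_iff, mem_preimage, and_congr_right_iff]
        intro hx; rw [hform x hx]
      rw [this]; exact measurableSet_Ico.inter (haff s c hA)
    · have : Ico (0:ℝ) (S.a 0) = ∅ := Ico_eq_empty (by intro h; exact h0 (lt_of_le_of_lt le_rfl h))
      simp [this]
  · refine MeasurableSet.biUnion (Finset.range (S.kI - 1)).countable_toSet (fun i hi => ?_)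
    have hi' : i + 1 < S.kI := by have := Finset.mem_range.1 hi; omega
    obtain ⟨s, c, hs, hform⟩ := S.branchJM hi'
    have : Ioo (S.a (2 * i + 1)) (S.a (2 * i + 2)) ∩ S.G ⁻¹' A =
        Ioo (S.a (2 * i + 1)) (S.a (2 * i + 2)) ∩ (fun x => s * x + c) ⁻¹' A := by
      ext x
      simp only [Set.mem_inter_iff, mem_preimage, and_congr_right_iff]
      intro hx; rw [hform x hx]
    rw [this]; exact measurableSet_Ioo.inter (haff s c hA)
  · by_cases h1 : S.a (2 * S.kI - 1) < 1
    · obtain ⟨s, c, hs, hform⟩ := S.branchJR h1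
      have : Ioc (S.a (2 * S.kI - 1)) 1 ∩ S.G ⁻¹' A =
          Ioc (S.a (2 * S.kI - 1)) 1 ∩ (fun x => s * x + c) ⁻¹' A := by
        ext x
        simp only [Set.mem_inter_iff, mem_preimage, and_congr_right_iff]
        intro hx; rw [hform x hx]
      rw [this]; exact measurableSet_Ioc.inter (haff s c hA)
    · have : Ioc (S.a (2 * S.kI - 1)) 1 = ∅ := Ioc_eq_empty (by push_neg at h1 ⊢; exact h1)
      simp [this]

/-- Measurable extension of `G`. -/
noncomputable def Gm : ℝ → ℝ := fun x => if x ∈ Icc (0:ℝ) 1 then S.G x else 0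

lemma measurable_Gm : Measurable S.Gm := by
  intro A hA
  by_cases h0 : (0:ℝ) ∈ A
  · have : S.Gm ⁻¹' A = (Icc 0 1 ∩ S.G ⁻¹' A) ∪ (Icc (0:ℝ) 1)ᶜ := by
      ext x; by_cases hx : x ∈ Icc (0:ℝ) 1 <;> simp [Gm, hx, h0]
    rw [this]
    exact (S.preimage_inter_measurable hA).union measurableSet_Icc.compl
  · have : S.Gm ⁻¹' A = Icc 0 1 ∩ S.G ⁻¹' A := by
      ext x; by_cases hx : x ∈ Icc (0:ℝ) 1 <;> simp [Gm, hx, h0]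
    rw [this]
    exact S.preimage_inter_measurable hA

lemma Gm_eq {x : ℝ} (hx : x ∈ Icc (0:ℝ) 1) : S.Gm x = S.G x := if_pos hx

lemma iter_mem (n : ℕ) {x : ℝ} (hx : x ∈ Icc (0:ℝ) 1) : S.G^[n] x ∈ Icc (0:ℝ) 1 := by
  induction n generalizing x with
  | zero => simpa using hx
  | succ n ih => rw [Function.iterate_succ_apply]; exact ih (S.hGmaps hx)

lemma Gm_iter (n : ℕ) {x : ℝ} (hx : x ∈ Icc (0:ℝ) 1) : S.Gm^[n] x = S.G^[n] x := by
  induction n generalizing x with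
  | zero => rfl
  | succ n ih =>
    rw [Function.iterate_succ_apply, Function.iterate_succ_apply, S.Gm_eq hx]
    exact ih (S.hGmaps hx)

end CantorData
namespace CantorData

variable (S : CantorData)

lemma G_preimage_decomp (A : Set ℝ) : Icc 0 1 ∩ S.G ⁻¹' A =
    (⋃ i ∈ Finset.range S.kI, Icc (S.a (2 * i)) (S.a (2 * i + 1)) ∩ S.G ⁻¹' A) ∪
    (Ico (0:ℝ) (S.a 0) ∩ S.G ⁻¹' A) ∪
    (⋃ i ∈ Finset.range (S.kI - 1), Ioo (S.a (2 * i + 1)) (S.a (2 * i + 2)) ∩ S.G ⁻¹' A) ∪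
    (Ioc (S.a (2 * S.kI - 1)) 1 ∩ S.G ⁻¹' A) := by
  have hkI := S.hkI
  apply Set.Subset.antisymm
  · rintro x ⟨hx, hxA⟩
    rcases S.cover hx with ⟨i, hi, hmem⟩ | ⟨_, hmem⟩ | ⟨i, hi, hmem⟩ | ⟨_, hmem⟩
    · exact Or.inl (Or.inl (Or.inl (Set.mem_biUnion (Finset.mem_range.2 hi) ⟨hmem, hxA⟩)))
    · exact Or.inl (Or.inl (Or.inr ⟨hmem, hxA⟩))
    · exact Or.inl (Or.inr (Set.mem_biUnion (Finset.mem_range.2 (by omega)) ⟨hmem, hxA⟩))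
    · exact Or.inr ⟨hmem, hxA⟩
  · rintro x (((h | h) | h) | h)
    · rcases Set.mem_iUnion₂.1 h with ⟨i, hi, hmem, hxA⟩
      exact ⟨S.IU_subset (S.mem_IU_iff.2 ⟨i, Finset.mem_range.1 hi, hmem⟩), hxA⟩
    · refine ⟨⟨h.1.1, ?_⟩, h.2⟩
      have : S.a 0 ≤ S.a (2 * S.kI - 1) := S.a_le (2 * S.kI - 1) (by omega) 0 (by omega)
      exact le_trans h.1.2.le (le_trans this S.ha1)
    · rcases Set.mem_iUnion₂.1 h with ⟨i, hi, hmem, hxA⟩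
      have hi' : i + 1 < S.kI := by have := Finset.mem_range.1 hi; omega
      refine ⟨⟨?_, ?_⟩, hxA⟩
      · have : S.a 0 ≤ S.a (2 * i + 1) := S.a_le (2 * i + 1) (by omega) 0 (by omega)
        exact le_trans S.ha0 (le_trans this hmem.1.le)
      · have : S.a (2 * i + 2) ≤ S.a (2 * S.kI - 1) :=
          S.a_le (2 * S.kI - 1) (by omega) (2 * i + 2) (by omega)
        exact le_trans hmem.2.le (le_trans this S.ha1)
    · refine ⟨⟨?_, h.1.2⟩, h.2⟩
      have : S.a 0 ≤ S.a (2 * S.kI - 1) := S.a_le (2 * S.kI - 1) (by omega) 0 (by omega)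
      exact le_trans S.ha0 (le_trans this h.1.1.le)

lemma null_preimage {A : Set ℝ} (hA : volume A = 0) :
    volume (Icc 0 1 ∩ S.G ⁻¹' A) = 0 := by
  rw [S.G_preimage_decomp A]
  have haffnull : ∀ s c : ℝ, s ≠ 0 → volume ((fun x : ℝ => s * x + c) ⁻¹' A) = 0 := by
    intro s c hs
    rw [volume_affine_preimage hs c A, hA, mul_zero]
  refine measure_union_null (measure_union_null (measure_union_null ?_ ?_) ?_) ?_
  · refine measure_biUnion_null_iff (Finset.range S.kI).countable_toSet |>.2 (fun i hi => ?_)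
    obtain ⟨s, c, hs, hform, _, _⟩ := S.branchI (Finset.mem_range.1 hi)
    refine measure_mono_null (fun x hx => ?_) (haffnull s c hs)
    exact Set.mem_preimage.2 (by rw [← hform x hx.1]; exact hx.2)
  · by_cases h0 : 0 < S.a 0
    · obtain ⟨s, c, hs, hform⟩ := S.branchJL h0
      refine measure_mono_null (fun x hx => ?_) (haffnull s c hs)
      exact Set.mem_preimage.2 (by rw [← hform x hx.1]; exact hx.2)
    · have : Ico (0:ℝ) (S.a 0) = ∅ := Ico_eq_empty (fun h => h0 (lt_of_le_of_lt le_rfl h))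
      simp [this]
  · refine measure_biUnion_null_iff (Finset.range (S.kI - 1)).countable_toSet |>.2 (fun i hi => ?_)
    have hkI := S.hkI
    have hi' : i + 1 < S.kI := by have := Finset.mem_range.1 hi; omega
    obtain ⟨s, c, hs, hform⟩ := S.branchJM hi'
    refine measure_mono_null (fun x hx => ?_) (haffnull s c hs)
    exact Set.mem_preimage.2 (by rw [← hform x hx.1]; exact hx.2)
  · by_cases h1 : S.a (2 * S.kI - 1) < 1
    · obtain ⟨s, c, hs, hform⟩ := S.branchJR h1
      refine measure_mono_null (fun x hx => ?_) (haffnull s c hs)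
      exact Set.mem_preimage.2 (by rw [← hform x hx.1]; exact hx.2)
    · have : Ioc (S.a (2 * S.kI - 1)) 1 = ∅ := Ioc_eq_empty (by push_neg at h1 ⊢; exact h1)
      simp [this]

lemma Lam_zero : S.Lam 0 = Icc 0 1 := by
  ext x; simp [Lam]

lemma Lam_subset (n : ℕ) : S.Lam n ⊆ Icc 0 1 := fun _ hx => hx.1

lemma Lam_eq (n : ℕ) : S.Lam n = Icc 0 1 ∩ ⋂ i ∈ Finset.range n, (S.Gm^[i]) ⁻¹' S.IU := by
  ext x
  simp only [Lam, mem_setOf_eq, Set.mem_inter_iff, Set.mem_iInter, mem_preimage,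
    Finset.mem_range]
  constructor
  · rintro ⟨hx, h⟩; exact ⟨hx, fun i hi => by rw [S.Gm_iter i hx]; exact h i hi⟩
  · rintro ⟨hx, h⟩; exact ⟨hx, fun i hi => by rw [← S.Gm_iter i hx]; exact h i hi⟩

lemma measurableSet_Lam (n : ℕ) : MeasurableSet (S.Lam n) := by
  rw [S.Lam_eq]
  exact measurableSet_Icc.inter (MeasurableSet.biInter (Finset.range n).countable_toSet
    (fun i _ => (S.measurable_Gm.iterate i) S.measurableSet_IU))

lemma Lam_succ (n : ℕ) : S.Lam (n + 1) =
    ⋃ i ∈ Finset.range S.kI, (Icc (S.a (2 * i)) (S.a (2 * i + 1)) ∩ S.G ⁻¹' S.Lam n) := by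
  ext x
  constructor
  · rintro ⟨hx, h⟩
    have h0 : x ∈ S.IU := by simpa using h 0 (Nat.succ_pos n)
    rcases S.mem_IU_iff.1 h0 with ⟨i, hi, hmem⟩
    refine Set.mem_biUnion (Finset.mem_range.2 hi) ⟨hmem, S.hGmaps hx, fun k hk => ?_⟩
    rw [← Function.iterate_succ_apply]
    exact h (k + 1) (by omega)
  · intro hx
    rcases Set.mem_iUnion₂.1 hx with ⟨i, hi, hmem, hG⟩
    have hxI : x ∈ Icc (0:ℝ) 1 := S.IU_subset (S.mem_IU_iff.2 ⟨i, Finset.mem_range.1 hi, hmem⟩)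
    refine ⟨hxI, fun k hk => ?_⟩
    cases k with
    | zero => simpa using S.mem_IU_iff.2 ⟨i, Finset.mem_range.1 hi, hmem⟩
    | succ k =>
      rw [Function.iterate_succ_apply]
      exact hG.2 k (by omega)

lemma lam_pos : 0 < S.lam := by
  have hkI := S.hkI
  refine Finset.sum_pos (fun i hi => ?_) ⟨0, Finset.mem_range.2 (by omega)⟩
  have hi' := Finset.mem_range.1 hi
  have := S.a_lt (show 2 * i < 2 * i + 1 by omega) (by omega)
  linarith

lemma lam_nonneg : 0 ≤ S.lam := S.lam_pos.le

lemma Idisjoint : (↑(Finset.range S.kI) : Set ℕ).PairwiseDisjoint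
    (fun i => Icc (S.a (2 * i)) (S.a (2 * i + 1))) := by
  have key : ∀ i j, i < j → j < S.kI →
      Disjoint (Icc (S.a (2 * i)) (S.a (2 * i + 1))) (Icc (S.a (2 * j)) (S.a (2 * j + 1))) := by
    intro i j h hj
    have hlt : S.a (2 * i + 1) < S.a (2 * j) := S.a_lt (by omega) (by omega)
    exact Set.disjoint_left.2 fun x hx hx' =>
      lt_irrefl x (lt_of_le_of_lt hx.2 (lt_of_lt_of_le hlt hx'.1))
  intro i hi j hj hij
  simp only [Finset.coe_range, mem_Iio] at hi hj
  rcases Nat.lt_or_ge i j with h | h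
  · exact key i j h hj
  · exact (key j i (by omega) hi).symm

lemma volume_Lam : ∀ n, volume (S.Lam n) = ENNReal.ofReal (S.lam ^ n) := by
  intro n
  induction n with
  | zero => rw [S.Lam_zero, Real.volume_Icc]; norm_num
  | succ n ih =>
    rw [S.Lam_succ n]
    have hform : ∀ i ∈ Finset.range S.kI,
        ∃ s c : ℝ, s ≠ 0 ∧ |s⁻¹| = S.a (2 * i + 1) - S.a (2 * i) ∧
        Icc (S.a (2 * i)) (S.a (2 * i + 1)) ∩ S.G ⁻¹' S.Lam n =
          (fun x => s * x + c) ⁻¹' S.Lam n := by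
      intro i hi
      obtain ⟨s, c, hs, hform, hpre, hlen⟩ := S.branchI (Finset.mem_range.1 hi)
      refine ⟨s, c, hs, hlen, ?_⟩
      apply Set.Subset.antisymm
      · rintro x ⟨hxI, hxG⟩
        exact Set.mem_preimage.2 (by rw [← hform x hxI]; exact hxG)
      · intro x hx
        have hxI : x ∈ Icc (S.a (2 * i)) (S.a (2 * i + 1)) := by
          rw [← hpre]; exact Set.mem_preimage.2 (S.Lam_subset n hx)
        exact ⟨hxI, Set.mem_preimage.2 (by rw [hform x hxI]; exact hx)⟩
    choose! s c hs hlen hset using hform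
    have hmeas : ∀ i ∈ Finset.range S.kI,
        MeasurableSet (Icc (S.a (2 * i)) (S.a (2 * i + 1)) ∩ S.G ⁻¹' S.Lam n) := by
      intro i hi
      rw [hset i hi]
      exact ((measurable_id.const_mul (s i)).add_const (c i)) (S.measurableSet_Lam n)
    have hdisj : (↑(Finset.range S.kI) : Set ℕ).PairwiseDisjoint
        (fun i => Icc (S.a (2 * i)) (S.a (2 * i + 1)) ∩ S.G ⁻¹' S.Lam n) := by
      intro i hi j hj hij
      exact (S.Idisjoint hi hj hij).mono (Set.inter_subset_left) (Set.inter_subset_left)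
    rw [measure_biUnion_finset hdisj hmeas]
    have hterm : ∀ i ∈ Finset.range S.kI,
        volume (Icc (S.a (2 * i)) (S.a (2 * i + 1)) ∩ S.G ⁻¹' S.Lam n) =
        ENNReal.ofReal ((S.a (2 * i + 1) - S.a (2 * i)) * S.lam ^ n) := by
      intro i hi
      rw [hset i hi, volume_affine_preimage (hs i hi) (c i) (S.Lam n), ih,
        hlen i hi, ← ENNReal.ofReal_mul]
      have := S.a_lt (show 2 * i < 2 * i + 1 by omega)
        (by have := Finset.mem_range.1 hi; omega)
      linarith
    rw [Finset.sum_congr rfl hterm, ← ENNReal.ofReal_sum_of_nonneg]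
    · congr 1
      rw [← Finset.sum_mul, pow_succ]
      have hsum : (∑ x ∈ Finset.range S.kI, (S.a (2 * x + 1) - S.a (2 * x))) = S.lam := rfl
      rw [hsum]; ring
    · intro i hi
      have := S.a_lt (show 2 * i < 2 * i + 1 by omega)
        (by have := Finset.mem_range.1 hi; omega)
      have := pow_nonneg S.lam_nonneg n
      nlinarith

end CantorData
namespace CantorData

variable (S : CantorData)

lemma Lam_one : S.Lam 1 = S.IU := by
  ext x
  simp only [Lam, mem_setOf_eq]
  constructor
  · rintro ⟨hx, h⟩
    simpa using h 0 (by omega)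
  · intro hx
    refine ⟨S.IU_subset hx, fun i hi => ?_⟩
    have : i = 0 := by omega
    subst this; simpa using hx

lemma volume_IU : volume S.IU = ENNReal.ofReal S.lam := by
  rw [← S.Lam_one, S.volume_Lam 1, pow_one]

lemma lam_lt_one : S.lam < 1 := by
  obtain ⟨z, hz⟩ := S.hkJ
  have hz1 : z ∈ Icc (0:ℝ) 1 := hz.1
  have hz2 : z ∉ S.IU := hz.2
  obtain ⟨ε, hε, hball⟩ := Metric.isOpen_iff.1 S.isClosed_IU.isOpen_compl z hz2
  set p := max 0 (z - ε / 2) with hp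
  set q := min 1 (z + ε / 2) with hq
  have hz0 := hz1.1
  have hz1' := hz1.2
  have hpq : p < q := by
    apply max_lt <;> apply lt_min <;> linarith
  have hK1 : Icc p q ⊆ Icc (0:ℝ) 1 := Icc_subset_Icc (le_max_left _ _) (min_le_left _ _)
  have hKball : Icc p q ⊆ Metric.ball z ε := by
    intro x hx
    have h1 : z - ε / 2 ≤ x := le_trans (le_max_right _ _) hx.1
    have h2 : x ≤ z + ε / 2 := le_trans hx.2 (min_le_right _ _)
    rw [Metric.mem_ball, Real.dist_eq, abs_lt]
    constructor <;> linarith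
  have hdisj : Disjoint S.IU (Icc p q) := by
    refine Set.disjoint_left.2 fun x hx hx' => ?_
    exact (hball (hKball hx')) hx
  have hsum : volume S.IU + volume (Icc p q) ≤ 1 := by
    rw [← measure_union hdisj measurableSet_Icc]
    calc volume (S.IU ∪ Icc p q) ≤ volume (Icc (0:ℝ) 1) :=
          measure_mono (Set.union_subset S.IU_subset hK1)
      _ = 1 := by rw [Real.volume_Icc]; norm_num
  rw [S.volume_IU, Real.volume_Icc, ← ENNReal.ofReal_add S.lam_nonneg (by linarith),
    show (1:ℝ≥0∞) = ENNReal.ofReal 1 by norm_num] at hsum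
  have := (ENNReal.ofReal_le_ofReal_iff (by norm_num)).1 hsum
  linarith

lemma C_null : volume {x ∈ Icc (0:ℝ) 1 | ∀ i, S.G^[i] x ∈ S.IU} = 0 := by
  have hle : ∀ n, volume {x ∈ Icc (0:ℝ) 1 | ∀ i, S.G^[i] x ∈ S.IU} ≤
      ENNReal.ofReal (S.lam ^ n) := by
    intro n
    refine le_trans (measure_mono (fun x hx => show x ∈ S.Lam n from ⟨hx.1, fun i _ => hx.2 i⟩)) ?_
    rw [S.volume_Lam n]
  have htend : Tendsto (fun n => ENNReal.ofReal (S.lam ^ n)) atTop (𝓝 0) := by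
    have h1 : Tendsto (fun n => S.lam ^ n) atTop (𝓝 0) :=
      tendsto_pow_atTop_nhds_zero_of_lt_one S.lam_nonneg S.lam_lt_one
    have := (ENNReal.continuous_ofReal.tendsto 0).comp h1
    simpa [Function.comp_def] using this
  have := ge_of_tendsto' htend hle
  simpa using this

lemma T_null (n : ℕ) :
    volume {x ∈ Icc (0:ℝ) 1 | ∀ i, n ≤ i → S.G^[i] x ∈ S.IU} = 0 := by
  induction n with
  | zero =>
    have h : {x ∈ Icc (0:ℝ) 1 | ∀ i, 0 ≤ i → S.G^[i] x ∈ S.IU} =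
        {x ∈ Icc (0:ℝ) 1 | ∀ i, S.G^[i] x ∈ S.IU} := by
      ext x; simp
    rw [h]; exact S.C_null
  | succ n ih =>
    have hsub : {x ∈ Icc (0:ℝ) 1 | ∀ i, n + 1 ≤ i → S.G^[i] x ∈ S.IU} ⊆
        Icc 0 1 ∩ S.G ⁻¹' {x ∈ Icc (0:ℝ) 1 | ∀ i, n ≤ i → S.G^[i] x ∈ S.IU} := by
      rintro x ⟨hx, h⟩
      refine ⟨hx, S.hGmaps hx, fun i hi => ?_⟩
      rw [← Function.iterate_succ_apply]
      exact h (i + 1) (by omega)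
    exact measure_mono_null hsub (S.null_preimage ih)

end CantorData
namespace CantorData

variable (S : CantorData)

lemma summable_ite (p : ℕ → Prop) [DecidablePred p] :
    Summable (fun i => if p i then (0:ℝ) else (2⁻¹:ℝ) ^ (i + 1)) := by
  have hgeo : Summable (fun i : ℕ => (2⁻¹:ℝ) ^ (i + 1)) := by
    have h1 : Summable (fun i : ℕ => (2⁻¹:ℝ) ^ i) :=
      summable_geometric_of_lt_one (by norm_num) (by norm_num)
    have := h1.mul_right (2⁻¹:ℝ)
    simpa [pow_succ] using this
  refine Summable.of_nonneg_of_le (fun i => ?_) (fun i => ?_) hgeo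
  · split <;> positivity
  · split
    · positivity
    · exact le_rfl

lemma tail_sum : ∀ n : ℕ, (∑' i : ℕ, if i < n then (0:ℝ) else (2⁻¹:ℝ) ^ (i + 1)) = (2⁻¹:ℝ) ^ n := by
  intro n
  induction n with
  | zero =>
    simp only [Nat.not_lt_zero, if_false]
    have h2 : ∀ i : ℕ, ((2:ℝ)⁻¹) ^ (i + 1) = ((2:ℝ)⁻¹) ^ i * 2⁻¹ := fun i => pow_succ _ _
    rw [tsum_congr h2, tsum_mul_right,
      tsum_geometric_of_lt_one (by norm_num) (by norm_num)]
    norm_num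
  | succ n ih =>
    have hS := summable_ite (fun i => i < n)
    have key := Summable.tsum_eq_add_tsum_ite hS n
    have heq : (fun i => if i = n then (0:ℝ) else if i < n then (0:ℝ) else (2⁻¹:ℝ) ^ (i + 1)) =
        (fun i => if i < n + 1 then (0:ℝ) else (2⁻¹:ℝ) ^ (i + 1)) := by
      funext i
      by_cases h1 : i = n
      · subst h1; simp
      · by_cases h2 : i < n
        · simp [h1, h2, Nat.lt_succ_of_lt h2]
        · have : ¬ i < n + 1 := by omega
          simp [h1, h2, this]
    rw [ih, if_neg (lt_irrefl n)] at key
    have : (∑' i : ℕ, if i = n then (0:ℝ) else if i < n then (0:ℝ) else (2⁻¹:ℝ) ^ (i + 1)) =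
        (2⁻¹:ℝ) ^ n - (2⁻¹:ℝ) ^ (n + 1) := by linarith
    rw [heq] at this
    rw [this, pow_succ]
    ring

lemma psi_nonneg (x : ℝ) : 0 ≤ S.psi x := by
  refine tsum_nonneg (fun i => ?_)
  split <;> positivity

lemma psi_le_of_forall {n : ℕ} {x : ℝ} (hx : ∀ i < n, S.G^[i] x ∈ S.IU) :
    S.psi x ≤ (2⁻¹:ℝ) ^ n := by
  rw [← tail_sum n]
  have hpt : ∀ i : ℕ, (if S.G^[i] x ∈ S.IU then (0:ℝ) else (2⁻¹:ℝ) ^ (i + 1)) ≤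
      (if i < n then (0:ℝ) else (2⁻¹:ℝ) ^ (i + 1)) := by
    intro i
    by_cases h : i < n
    · simp [h, hx i h]
    · simp only [h, if_false]
      split
      · positivity
      · exact le_rfl
  exact Summable.tsum_le_tsum hpt (summable_ite _) (summable_ite _)

lemma psi_ge {n : ℕ} {x : ℝ} (hx : S.G^[n] x ∉ S.IU) : (2⁻¹:ℝ) ^ (n + 1) ≤ S.psi x := by
  have hnn : ∀ j : ℕ, j ≠ n →
      (0:ℝ) ≤ (if S.G^[j] x ∈ S.IU then (0:ℝ) else (2⁻¹:ℝ) ^ (j + 1)) := by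
    intro j _
    split
    · exact le_rfl
    · positivity
  have h := Summable.le_tsum (summable_ite (fun i => S.G^[i] x ∈ S.IU)) n hnn
  rw [if_neg hx] at h
  exact h

lemma psi_zero_terms {m : ℕ} {x : ℝ} (hm : S.G^[m] x ∉ S.IU)
    (hle : S.psi x ≤ (2⁻¹:ℝ) ^ (m + 1)) : ∀ i, i ≠ m → S.G^[i] x ∈ S.IU := by
  intro i him
  by_contra hbad
  have hsum := summable_ite (fun i => S.G^[i] x ∈ S.IU)
  have key := Summable.tsum_eq_add_tsum_ite hsum m
  rw [if_neg hm] at key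
  have hres : Summable (fun i => if i = m then (0:ℝ) else
      if S.G^[i] x ∈ S.IU then (0:ℝ) else (2⁻¹:ℝ) ^ (i + 1)) := by
    refine Summable.of_nonneg_of_le (fun j => ?_) (fun j => ?_)
      (summable_ite (fun i => S.G^[i] x ∈ S.IU))
    · split
      · exact le_rfl
      · split
        · exact le_rfl
        · positivity
    · split
      · split
        · exact le_rfl
        · positivity
      · exact le_rfl
  have hnn : ∀ j : ℕ, j ≠ i → (0:ℝ) ≤ (if j = m then (0:ℝ) else
      if S.G^[j] x ∈ S.IU then (0:ℝ) else (2⁻¹:ℝ) ^ (j + 1)) := by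
    intro j _
    split
    · exact le_rfl
    · split
      · exact le_rfl
      · positivity
  have hterm := Summable.le_tsum hres i hnn
  rw [if_neg him, if_neg hbad] at hterm
  have hpos : (0:ℝ) < (2⁻¹:ℝ) ^ (i + 1) := by positivity
  have : S.psi x = (2⁻¹:ℝ) ^ (m + 1) + ∑' i, (if i = m then (0:ℝ) else
      if S.G^[i] x ∈ S.IU then (0:ℝ) else (2⁻¹:ℝ) ^ (i + 1)) := key
  linarith

end CantorData
namespace CantorData

variable (S : CantorData)

lemma mes_apply (A : Set ℝ) : S.mes A = volume (A ∩ Icc 0 1) :=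
  Measure.restrict_apply' measurableSet_Icc

lemma mes_ne_top (A : Set ℝ) : S.mes A ≠ ⊤ := by
  rw [S.mes_apply]
  have h : volume (A ∩ Icc 0 1) ≤ volume (Icc (0:ℝ) 1) := measure_mono inter_subset_right
  rw [Real.volume_Icc] at h
  exact ne_top_of_le_ne_top ENNReal.ofReal_ne_top h

lemma F_mono : Monotone S.F := by
  intro s t hst
  exact ENNReal.toReal_mono (S.mes_ne_top _)
    (measure_mono (fun x hx => le_trans hx hst))

lemma F_nonneg (t : ℝ) : 0 ≤ S.F t := ENNReal.toReal_nonneg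

lemma F_le_of_Lam {n : ℕ} {x : ℝ} (hx : x ∈ S.Lam n) : S.F (S.psi x) ≤ S.lam ^ n := by
  have h1 : S.psi x ≤ (2⁻¹:ℝ) ^ n := S.psi_le_of_forall hx.2
  have hsub : {y | S.psi y ≤ S.psi x} ∩ Icc 0 1 ⊆
      S.Lam n ∪ {y ∈ Icc (0:ℝ) 1 | ∀ i, n ≤ i → S.G^[i] y ∈ S.IU} := by
    rintro y ⟨hy, hyI⟩
    by_cases hyL : y ∈ S.Lam n
    · exact Or.inl hyL
    have hyb : S.psi y ≤ (2⁻¹:ℝ) ^ n := le_trans hy h1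
    have hb : ∃ i, i < n ∧ S.G^[i] y ∉ S.IU := by
      by_contra hc
      push_neg at hc
      exact hyL ⟨hyI, hc⟩
    have hspec : Nat.find hb < n ∧ S.G^[Nat.find hb] y ∉ S.IU := Nat.find_spec hb
    set m := Nat.find hb with hm
    have hge : (2⁻¹:ℝ) ^ (m + 1) ≤ S.psi y := S.psi_ge hspec.2
    have hmn : m + 1 = n := by
      by_contra hne
      have hlt : m + 1 < n := by omega
      have : (2⁻¹:ℝ) ^ n < (2⁻¹:ℝ) ^ (m + 1) :=
        pow_lt_pow_right_of_lt_one₀ (by norm_num) (by norm_num) hlt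
      linarith
    have hzero := S.psi_zero_terms hspec.2 (by rw [hmn]; exact hyb)
    exact Or.inr ⟨hyI, fun i hi => hzero i (by omega)⟩
  have hM : S.mes {y | S.psi y ≤ S.psi x} ≤ ENNReal.ofReal (S.lam ^ n) := by
    rw [S.mes_apply]
    refine le_trans (measure_mono hsub) (le_trans (measure_union_le _ _) ?_)
    rw [S.volume_Lam n, S.T_null n, add_zero]
  have h2 := ENNReal.toReal_mono ENNReal.ofReal_ne_top hM
  rwa [ENNReal.toReal_ofReal (pow_nonneg S.lam_nonneg n)] at h2

lemma F_ge_of_escape {n : ℕ} {x : ℝ} (hx : S.G^[n] x ∉ S.IU) :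
    S.lam ^ (n + 1) ≤ S.F (S.psi x) := by
  have hsub : S.Lam (n + 1) ⊆ {y | S.psi y ≤ S.psi x} ∩ Icc 0 1 := by
    intro y hy
    exact ⟨le_trans (S.psi_le_of_forall hy.2) (S.psi_ge hx), hy.1⟩
  have hM : ENNReal.ofReal (S.lam ^ (n + 1)) ≤ S.mes {y | S.psi y ≤ S.psi x} := by
    rw [S.mes_apply, ← S.volume_Lam (n + 1)]
    exact measure_mono hsub
  have h2 := ENNReal.toReal_mono (S.mes_ne_top _) hM
  rwa [ENNReal.toReal_ofReal (pow_nonneg S.lam_nonneg _)] at h2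

/-- Measurable version of `psi`, using the measurable extension `Gm`. -/
noncomputable def psim (x : ℝ) : ℝ :=
  ∑' i : ℕ, if S.Gm^[i] x ∈ S.IU then (0:ℝ) else (2⁻¹:ℝ) ^ (i + 1)

lemma psim_eq {x : ℝ} (hx : x ∈ Icc (0:ℝ) 1) : S.psim x = S.psi x := by
  unfold psim psi
  exact tsum_congr fun i => by rw [S.Gm_iter i hx]

lemma measurable_psim : Measurable S.psim := by
  have hterm : ∀ i : ℕ,
      Measurable (fun x => if S.Gm^[i] x ∈ S.IU then (0:ℝ) else (2⁻¹:ℝ) ^ (i + 1)) := by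
    intro i
    have hms : MeasurableSet {x : ℝ | S.Gm^[i] x ∈ S.IU} :=
      (S.measurable_Gm.iterate i) S.measurableSet_IU
    exact Measurable.ite hms measurable_const measurable_const
  have hpart : ∀ n : ℕ, Measurable (fun x => ∑ i ∈ Finset.range n,
      if S.Gm^[i] x ∈ S.IU then (0:ℝ) else (2⁻¹:ℝ) ^ (i + 1)) :=
    fun n => Finset.measurable_sum _ (fun i _ => hterm i)
  apply measurable_of_tendsto_metrizable' atTop hpart
  rw [tendsto_pi_nhds]
  intro x
  exact (summable_ite (fun i => S.Gm^[i] x ∈ S.IU)).hasSum.tendsto_sum_nat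

lemma phi_iff {α u : ℝ} (hα : 0 < α) (hu : 1 < u) (x : ℝ) :
    ENNReal.ofReal u < S.phi α x ↔ S.F (S.psi x) < u ^ (-α) := by
  have hu0 : (0:ℝ) < u := lt_trans one_pos hu
  have hαinv : 0 < 1 / α := by positivity
  have hexp : -(1 / α) < 0 := by linarith
  rcases eq_or_lt_of_le (S.F_nonneg (S.psi x)) with h0 | h0
  · have hphi : S.phi α x = ⊤ := by
      unfold phi
      rw [← h0, ENNReal.ofReal_zero, ENNReal.zero_rpow_of_neg hexp]
    rw [hphi]
    exact iff_of_true ENNReal.ofReal_lt_top (by rw [← h0]; exact Real.rpow_pos_of_pos hu0 _)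
  · set b := S.F (S.psi x) with hb
    have hphi : S.phi α x = ENNReal.ofReal (b ^ (-(1 / α))) := by
      unfold phi
      rw [ENNReal.ofReal_rpow_of_pos h0]
    rw [hphi, ENNReal.ofReal_lt_ofReal_iff (Real.rpow_pos_of_pos h0 _)]
    constructor
    · intro h
      have h2 : (b ^ (-(1 / α))) ^ (-α) < u ^ (-α) :=
        Real.rpow_lt_rpow_of_neg hu0 h (by linarith)
      have h3 : (b ^ (-(1 / α))) ^ (-α) = b := by
        rw [← Real.rpow_mul h0.le, show -(1 / α) * -α = 1 by field_simp, Real.rpow_one]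
      rwa [h3] at h2
    · intro h
      have h2 : (u ^ (-α)) ^ (-(1 / α)) < b ^ (-(1 / α)) :=
        Real.rpow_lt_rpow_of_neg h0 h hexp
      have h3 : (u ^ (-α)) ^ (-(1 / α)) = u := by
        rw [← Real.rpow_mul hu0.le, show -α * -(1 / α) = 1 by field_simp, Real.rpow_one]
      rwa [h3] at h2

end CantorData
/-- for every `u > 1` there are `j ≥ 1` and a Borel set
`H ⊆ Λ_{j-1} ∖ Λ_j` such that `{φ_α > u} = Λ_j ∪ H` up to an `𝔪`-null set;
consequently `λ^j ≤ u^{-α} ≤ λ^{j-1}`. -/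
theorem rare_event_set_structure (S : CantorData) (α : ℝ)
    (hα : α ∈ Set.Ioo (0:ℝ) 2) (u : ℝ) (hu : 1 < u) :
    ∃ j : ℕ, 1 ≤ j ∧ ∃ H : Set ℝ, MeasurableSet H ∧ H ⊆ S.Lam (j - 1) \ S.Lam j ∧
      S.mes (symmDiff {x ∈ Set.Icc (0:ℝ) 1 | ENNReal.ofReal u < S.phi α x}
        (S.Lam j ∪ H)) = 0 ∧
      S.lam ^ j ≤ u ^ (-α) ∧ u ^ (-α) ≤ S.lam ^ (j - 1) := by
  obtain ⟨hα0, hα2⟩ := hα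
  have hu0 : (0:ℝ) < u := lt_trans one_pos hu
  set t := u ^ (-α) with ht
  have ht0 : 0 < t := Real.rpow_pos_of_pos hu0 _
  have ht1 : t < 1 := by
    have h := Real.rpow_lt_rpow_of_exponent_lt hu (show -α < 0 by linarith)
    rwa [Real.rpow_zero] at h
  -- choose j with lam ^ j < t ≤ lam ^ (j - 1)
  have hex : ∃ j : ℕ, S.lam ^ j ≤ t := by
    obtain ⟨n, hn⟩ := exists_pow_lt_of_lt_one ht0 S.lam_lt_one
    exact ⟨n, hn.le⟩
  obtain ⟨j, hj1, hjlt, hjge⟩ : ∃ j : ℕ, 1 ≤ j ∧ S.lam ^ j < t ∧ t ≤ S.lam ^ (j - 1) := by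
    set j₀ := Nat.find hex with hj₀def
    have hj₀ : S.lam ^ j₀ ≤ t := Nat.find_spec hex
    have hj₀pos : 1 ≤ j₀ := by
      rcases Nat.eq_zero_or_pos j₀ with h | h
      · exfalso; rw [h, pow_zero] at hj₀; linarith
      · exact h
    have hmin : ¬ S.lam ^ (j₀ - 1) ≤ t := Nat.find_min hex (by omega)
    rcases eq_or_lt_of_le hj₀ with heq | hlt
    · refine ⟨j₀ + 1, by omega, ?_, ?_⟩
      · calc S.lam ^ (j₀ + 1) < S.lam ^ j₀ :=
              pow_lt_pow_right_of_lt_one₀ S.lam_pos S.lam_lt_one (by omega)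
          _ = t := heq
      · simp only [Nat.add_sub_cancel]
        exact le_of_eq heq.symm
    · exact ⟨j₀, hj₀pos, hlt, (not_le.1 hmin).le⟩
  refine ⟨j, hj1, ?_⟩
  set H := (S.Lam (j - 1) \ S.Lam j) ∩ {x | S.F (S.psim x) < t} with hH
  have hHmeas : MeasurableSet H :=
    ((S.measurableSet_Lam _).diff (S.measurableSet_Lam _)).inter
      (measurableSet_lt (S.F_mono.measurable.comp S.measurable_psim) measurable_const)
  refine ⟨H, hHmeas, inter_subset_left, ?_, hjlt.le, hjge⟩
  have hset : {x ∈ Set.Icc (0:ℝ) 1 | ENNReal.ofReal u < S.phi α x} = S.Lam j ∪ H := by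
    ext x
    constructor
    · rintro ⟨hx, hphi⟩
      have hF : S.F (S.psi x) < t := (S.phi_iff hα0 hu x).1 hphi
      by_cases hxj : x ∈ S.Lam j
      · exact Or.inl hxj
      by_cases hxj1 : x ∈ S.Lam (j - 1)
      · refine Or.inr ⟨⟨hxj1, hxj⟩, ?_⟩
        rw [Set.mem_setOf_eq, S.psim_eq hx]
        exact hF
      · exfalso
        have hb : ∃ i, i < j - 1 ∧ S.G^[i] x ∉ S.IU := by
          by_contra hc
          push_neg at hc
          exact hxj1 ⟨hx, hc⟩
        have hspec : Nat.find hb < j - 1 ∧ S.G^[Nat.find hb] x ∉ S.IU := Nat.find_spec hb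
        have hge : S.lam ^ (Nat.find hb + 1) ≤ S.F (S.psi x) := S.F_ge_of_escape hspec.2
        have hord : S.lam ^ (j - 1) ≤ S.lam ^ (Nat.find hb + 1) :=
          pow_le_pow_of_le_one S.lam_nonneg S.lam_lt_one.le (by omega)
        linarith
    · intro hx
      rcases hx with hxj | hxH
      · have hxI : x ∈ Set.Icc (0:ℝ) 1 := S.Lam_subset j hxj
        exact ⟨hxI, (S.phi_iff hα0 hu x).2 (lt_of_le_of_lt (S.F_le_of_Lam hxj) hjlt)⟩
      · have hxI : x ∈ Set.Icc (0:ℝ) 1 := S.Lam_subset (j - 1) hxH.1.1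
        refine ⟨hxI, (S.phi_iff hα0 hu x).2 ?_⟩
        have h2 := hxH.2
        rwa [Set.mem_setOf_eq, S.psim_eq hxI] at h2
  rw [hset, symmDiff_self]
  simp
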